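/- arXiv:2402.08254 — 5 statements merged into one kernel-verified Lean document; each statement's English description precedes it below -/
import Mathlib

section
/- Let K be a local field of characteristic p with valuation ring O_K, maximal ideal m_K, and finite residue field k embedded in O_K. Let f = ∑_{i=0}^d f_i τ^i with all f_i ∈ O_K, f_d ∈ O_K^×, and d > 0, and let f̄ = ∑_{i=0}^d f̄_i τ^i where f̄_i ∈ k ⊂ O_K is the residue of f_i. Then there exists a unique element x = ∑_{j≤0} x_j τ^j with all x_j ∈ O_K and x ≡ 1 modulo m_K such that f x = x f̄ in the twisted Laurent series ring. -/
/-!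
STATEMENT 3: Let `K` be a local field of characteristic `p` with finite residue field `k`,
modelled as `K = k((t)) = LaurentSeries k`, with normalized additive valuation
`v = HahnSeries.orderTop`; the canonical section `k ↪ O_K` is `HahnSeries.C`, and the residue of
an integral element is its `0`-th coefficient.  Let `f = ∑_{i=0}^d f_i τ^i` with `f_i ∈ O_K`,
`f_d ∈ O_K^×` and `d > 0`, and let `f̄_i ∈ k ⊆ O_K` be the residues.  Then there is a unique
`x = ∑_{j ≤ 0} x_j τ^j` with all `x_j ∈ O_K` and `x ≡ 1 mod m_K` such that `f x = x f̄` in the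
twisted Laurent series ring (`τ z = z^p τ`).  A series in nonpositive powers of `τ` is recorded
by its coefficients `x : ℕ → K` (`x n` = coefficient of `τ^{-n}`), and the identity `f x = x f̄`
is spelled out coefficientwise: the coefficient of `τ^{d - m}` of `f x - x f̄` vanishes for
every `m : ℕ`; the terms `f̄_i^{p^j}` for `j ≤ 0` use the inverse Frobenius of the finite
(hence perfect) field `k`.
-/

/-- The coefficient of `τ^{d-m}` in `f x - x f̄`, where `x = ∑_{n≥0} x_n τ^{-n}`:
`∑_{i+j = d-m, 0 ≤ i ≤ d, j ≤ 0} (f_i x_j^{p^i} - x_j f̄_i^{p^j})`, with `j = d - m - i ≤ 0`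
written as `-(m + i - d)`. -/
noncomputable def conjEqCoeff (p : ℕ) [Fact p.Prime] {k : Type*} [Field k] [Fintype k]
    [CharP k p] (d : ℕ) (f : ℕ → LaurentSeries k) (x : ℕ → LaurentSeries k) (m : ℕ) :
    LaurentSeries k :=
  ∑ i ∈ (Finset.range (d + 1)).filter (fun i => d ≤ m + i),
    (f i * (x (m + i - d)) ^ (p ^ i) -
      x (m + i - d) * HahnSeries.C ((⇑(frobeniusEquiv k p).symm)^[m + i - d] ((f i).coeff 0)))

namespace ConjAux

variable {k : Type*} [Field k]


variable {k : Type*} [Field k]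

/-- All coefficients below `n` vanish. -/
def Vge (n : ℤ) (s : LaurentSeries k) : Prop := ∀ j : ℤ, j < n → s.coeff j = 0

lemma vge_iff {n : ℤ} {s : LaurentSeries k} : Vge n s ↔ (n : WithTop ℤ) ≤ s.orderTop := by
  constructor
  · intro h
    by_contra hlt
    push_neg at hlt
    have hs : s ≠ 0 := by
      intro h0
      rw [h0, HahnSeries.orderTop_zero] at hlt
      exact not_top_lt hlt
    have horder := HahnSeries.orderTop_of_ne_zero hs
    set g := s.isWF_support.min (HahnSeries.support_nonempty_iff.2 hs) with hg
    rw [horder] at hlt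
    have hgn : g < n := by exact_mod_cast hlt
    exact HahnSeries.coeff_orderTop_ne horder (h g hgn)
  · intro h j hj
    exact HahnSeries.coeff_eq_zero_of_lt_orderTop (lt_of_lt_of_le (by exact_mod_cast hj) h)

lemma zero_lt_iff_one_le {x : WithTop ℤ} : 0 < x ↔ (1 : WithTop ℤ) ≤ x := by
  cases x with
  | top => simp
  | coe a =>
    constructor
    · intro h; exact_mod_cast (by exact_mod_cast h : (0:ℤ) < a)
    · intro h; exact_mod_cast (by exact_mod_cast h : (1:ℤ) ≤ a)

lemma vge_zero_iff {s : LaurentSeries k} : Vge 0 s ↔ 0 ≤ s.orderTop := by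
  rw [vge_iff]; norm_cast

lemma vge_one_iff {s : LaurentSeries k} : Vge 1 s ↔ 0 < s.orderTop := by
  rw [vge_iff, zero_lt_iff_one_le]; norm_cast

lemma Vge.mono {m n : ℤ} (h : m ≤ n) {s : LaurentSeries k} (hs : Vge n s) : Vge m s :=
  fun j hj => hs j (lt_of_lt_of_le hj h)

lemma vge_zero_series (n : ℤ) : Vge n (0 : LaurentSeries k) := fun _ _ => rfl

lemma Vge.add {n : ℤ} {s t : LaurentSeries k} (hs : Vge n s) (ht : Vge n t) :
    Vge n (s + t) := fun j hj => by
  rw [HahnSeries.coeff_add, hs j hj, ht j hj, add_zero]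

lemma Vge.sub {n : ℤ} {s t : LaurentSeries k} (hs : Vge n s) (ht : Vge n t) :
    Vge n (s - t) := fun j hj => by
  rw [HahnSeries.coeff_sub, hs j hj, ht j hj, sub_zero]

lemma Vge.neg {n : ℤ} {s : LaurentSeries k} (hs : Vge n s) : Vge n (-s) := fun j hj => by
  rw [HahnSeries.coeff_neg, hs j hj, neg_zero]

lemma Vge.mul {m n : ℤ} {s t : LaurentSeries k} (hs : Vge m s) (ht : Vge n t) :
    Vge (m + n) (s * t) := by
  intro j hj
  rw [HahnSeries.coeff_mul]
  apply Finset.sum_eq_zero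
  rintro ⟨u, v⟩ huv
  rw [Finset.mem_addAntidiagonal] at huv
  obtain ⟨-, -, hsum⟩ := huv
  by_cases hu : u < m
  · rw [hs u hu, zero_mul]
  · rw [ht v (by omega), mul_zero]

lemma vge_one_one : Vge 0 (1 : LaurentSeries k) := by
  intro j hj
  rw [HahnSeries.coeff_one, if_neg (by omega)]

lemma vge_C (a : k) : Vge 0 (HahnSeries.C a : LaurentSeries k) := by
  intro j hj
  rw [HahnSeries.C_apply, HahnSeries.coeff_single_of_ne (by omega)]

lemma Vge.pow {m : ℤ} {s : LaurentSeries k} (hs : Vge m s) (n : ℕ) :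
    Vge (n * m) (s ^ n) := by
  induction n with
  | zero => simpa using vge_one_one
  | succ n ih =>
    rw [pow_succ]
    have := ih.mul hs
    push_cast
    ring_nf
    ring_nf at this
    exact this



lemma fixedPoint (q : ℕ) (hq : 2 ≤ q)
    (hchar : ∀ u v : LaurentSeries k, (u - v) ^ q = u ^ q - v ^ q)
    (b a : LaurentSeries k) (hb : Vge 0 b) (ha : Vge 1 a) :
    ∃! z : LaurentSeries k, Vge 1 z ∧ z = a + b * z ^ q := by
  set F : LaurentSeries k → LaurentSeries k := fun z => a + b * z ^ q with hF
  set zs : ℕ → LaurentSeries k := fun n => F^[n] 0 with hzs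
  have hzs_succ : ∀ n, zs (n + 1) = a + b * zs n ^ q := by
    intro n
    simp only [hzs, Function.iterate_succ_apply']
    rfl
  have hFdiff : ∀ u v : LaurentSeries k, F u - F v = b * (u - v) ^ q := by
    intro u v
    simp only [hF, hchar]
    ring
  -- all iterates have positive order
  have h1 : ∀ n, Vge 1 (zs n) := by
    intro n
    induction n with
    | zero => exact vge_zero_series 1
    | succ n ih =>
      rw [hzs_succ]
      refine ha.add ?_
      have := hb.mul (ih.pow q)
      have h2 : (1 : ℤ) ≤ 0 + q * 1 := by push_cast; omega
      exact this.mono h2 |>.mono (le_refl 1) |> fun h => h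
  -- consecutive differences
  have hdiff : ∀ n : ℕ, Vge (n + 1) (zs (n + 1) - zs n) := by
    intro n
    induction n with
    | zero =>
      have : zs 1 - zs 0 = a := by
        simp [hzs, hF, zero_pow (by omega : q ≠ 0)]
      rw [this]; exact ha.mono (by norm_num)
    | succ n ih =>
      have : zs (n + 2) - zs (n + 1) = b * (zs (n + 1) - zs n) ^ q := by
        have := hFdiff (zs (n + 1)) (zs n)
        simpa only [hzs, ← Function.iterate_succ_apply'] using this
      rw [this]
      have := hb.mul (ih.pow q)
      refine this.mono ?_
      push_cast
      nlinarith
  -- Cauchy-type bound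
  have hcau : ∀ n n' : ℕ, n ≤ n' → Vge (n + 1) (zs n' - zs n) := by
    intro n n' h
    induction n', h using Nat.le_induction with
    | base => simpa [sub_self] using vge_zero_series (k := k) (n + 1)
    | succ n' hn ih =>
      have : zs (n' + 1) - zs n = (zs (n' + 1) - zs n') + (zs n' - zs n) := by ring
      rw [this]
      exact ((hdiff n').mono (by omega)).add ih
  -- the limit
  have hbdd : BddBelow (Function.support (fun j : ℤ => (zs (j.toNat + 1)).coeff j)) :=
    HahnSeries.forallLTEqZero_supp_BddBelow _ 1 (fun j hj => h1 _ j hj)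
  set Z : LaurentSeries k := HahnSeries.ofSuppBddBelow _ hbdd with hZdef
  have hZcoeff : ∀ j : ℤ, Z.coeff j = (zs (j.toNat + 1)).coeff j := fun _ => rfl
  have hZc : ∀ (n : ℕ) (j : ℤ), j < (n : ℤ) + 1 → Z.coeff j = (zs (n + 1)).coeff j := by
    intro n j hj
    rw [hZcoeff]
    by_cases hj1 : j < 1
    · rw [h1 _ j hj1, h1 _ j hj1]
    · have hle : j.toNat + 1 ≤ n + 1 := by omega
      have := hcau (j.toNat + 1) (n + 1) hle j (by push_cast; omega)
      rw [HahnSeries.coeff_sub] at this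
      exact (sub_eq_zero.mp this).symm
  have hZ1 : Vge 1 Z := by
    intro j hj
    rw [hZcoeff]
    exact h1 _ j hj
  have hZdiff : ∀ n : ℕ, Vge ((n : ℤ) + 1) (Z - zs (n + 1)) := by
    intro n j hj
    rw [HahnSeries.coeff_sub, hZc n j hj, sub_self]
  have hZfix : Z = a + b * Z ^ q := by
    rw [← sub_eq_zero]
    apply HahnSeries.coeff_injective
    funext j
    show (Z - (a + b * Z ^ q)).coeff j = (0 : LaurentSeries k).coeff j
    set n := j.toNat with hn
    have hsplit : Z - (a + b * Z ^ q) = (Z - zs (n + 2)) + (zs (n + 2) - F Z) := by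
      simp only [hF]; ring
    have h2 : Vge ((n : ℤ) + 2) (zs (n + 2) - F Z) := by
      have : zs (n + 2) - F Z = b * (zs (n + 1) - Z) ^ q := by
        have := hFdiff (zs (n + 1)) Z
        have h3 : F (zs (n + 1)) = zs (n + 2) := by
          simp only [hzs, ← Function.iterate_succ_apply']
        rw [h3] at this
        exact this
      rw [this]
      have h4 : Vge ((n : ℤ) + 1) (zs (n + 1) - Z) := by
        intro i hi
        rw [HahnSeries.coeff_sub, hZc n i hi, sub_self]
      have := hb.mul (h4.pow q)
      refine this.mono ?_
      push_cast
      nlinarith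
    have h5 : Vge ((n : ℤ) + 1) (Z - (a + b * Z ^ q)) := by
      rw [hsplit]
      exact (((hZdiff (n + 1)).mono (by push_cast; omega))).add (h2.mono (by omega))
    rw [h5 j (by omega)]
    simp
  refine ⟨Z, ⟨hZ1, hZfix⟩, ?_⟩
  rintro y ⟨hy1, hyfix⟩
  rw [← sub_eq_zero]
  have hw : ∀ n : ℕ, Vge ((n : ℤ) + 1) (y - Z) := by
    intro n
    induction n with
    | zero => simpa using hy1.sub hZ1
    | succ n ih =>
      have : y - Z = b * (y - Z) ^ q := by
        calc y - Z = F y - F Z := by simp only [hF]; rw [← hyfix, ← hZfix]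
        _ = b * (y - Z) ^ q := hFdiff y Z
      rw [this]
      have := hb.mul (ih.pow q)
      refine this.mono ?_
      push_cast
      nlinarith
  apply HahnSeries.coeff_injective
  funext j
  show (y - Z).coeff j = (0 : LaurentSeries k).coeff j
  rw [hw j.toNat j (by omega)]
  simp


lemma vge_sum {k : Type*} [Field k] {n : ℤ} {ι : Type*} (s : Finset ι)
    (g : ι → LaurentSeries k) (h : ∀ i ∈ s, Vge n (g i)) : Vge n (∑ i ∈ s, g i) := by
  induction s using Finset.cons_induction with
  | empty => simpa using vge_zero_series n
  | cons a s ha ih =>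
    rw [Finset.sum_cons]
    exact (h _ (Finset.mem_cons_self a s)).add (ih fun i hi => h i (Finset.mem_cons_of_mem hi))

lemma vge1_fsubC {k : Type*} [Field k] (s : LaurentSeries k) (h : 0 ≤ s.orderTop) :
    Vge 1 (s - HahnSeries.C (s.coeff 0)) := by
  intro j hj
  rw [HahnSeries.coeff_sub, HahnSeries.C_apply, HahnSeries.coeff_single]
  by_cases hj0 : j = 0
  · subst hj0; simp
  · rw [if_neg hj0, sub_zero]
    exact (vge_zero_iff.mpr h) j (by omega)

section Main

variable (p : ℕ) [Fact p.Prime] (k : Type*) [Field k] [Fintype k] [CharP k p]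
variable (d : ℕ) (f : ℕ → LaurentSeries k)

instance : CharP (LaurentSeries k) p :=
  charP_of_injective_ringHom (f := (HahnSeries.C : k →+* LaurentSeries k))
    HahnSeries.C_injective p

lemma hchar_pd : ∀ u v : LaurentSeries k, (u - v) ^ (p ^ d) = u ^ (p ^ d) - v ^ (p ^ d) :=
  fun u v => sub_pow_char_pow u v d

/-- residues, twisted by inverse Frobenius -/
noncomputable def fr (i j : ℕ) : k := (⇑(frobeniusEquiv k p).symm)^[j] ((f i).coeff 0)

/-- the constant term of `x`: `1` at index `0`, `0` elsewhere -/
noncomputable def ee (m : ℕ) : LaurentSeries k := if m = 0 then 1 else 0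

/-- the part of the `m`-th equation involving previous unknowns -/
noncomputable def G (x : ℕ → LaurentSeries k) (m : ℕ) : LaurentSeries k :=
  ∑ i ∈ (Finset.range d).filter (fun i => d ≤ m + i),
    (f i * (x (m + i - d)) ^ (p ^ i) - x (m + i - d) * HahnSeries.C (fr p k f i (m + i - d)))

noncomputable def av (x : ℕ → LaurentSeries k) (m : ℕ) : LaurentSeries k :=
  (HahnSeries.C (fr p k f d m) : LaurentSeries k)⁻¹ *
    (G p k d f x m + ee k m * (f d - HahnSeries.C (fr p k f d m)))

noncomputable def bv (m : ℕ) : LaurentSeries k :=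
  (HahnSeries.C (fr p k f d m) : LaurentSeries k)⁻¹ * f d

lemma conj_split (x : ℕ → LaurentSeries k) (m : ℕ) :
    conjEqCoeff p d f x m =
      (f d * (x m) ^ (p ^ d) - x m * HahnSeries.C (fr p k f d m)) + G p k d f x m := by
  simp only [conjEqCoeff, G, fr]
  rw [Finset.range_add_one, Finset.filter_insert, if_pos (Nat.le_add_left d m),
    Finset.sum_insert (by simp), Nat.add_sub_cancel]

lemma eq_iff (hc : fr p k f d m ≠ 0) (x : ℕ → LaurentSeries k) :
    conjEqCoeff p d f x m = 0 ↔
      x m - ee k m = av p k d f x m + bv p k d f m * (x m - ee k m) ^ (p ^ d) := by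
  have hq0 : p ^ d ≠ 0 := pow_ne_zero d (Nat.Prime.ne_zero Fact.out)
  set c : LaurentSeries k := HahnSeries.C (fr p k f d m) with hcdef
  have hc0 : c ≠ 0 := HahnSeries.C_ne_zero hc
  have hcc1 : c⁻¹ * c = 1 := inv_mul_cancel₀ hc0
  have hcc2 : c * c⁻¹ = 1 := mul_inv_cancel₀ hc0
  set y := x m with hy
  set E := ee k m with hE
  set q := p ^ d with hqdef
  set S := G p k d f x m with hS
  have hEq : E ^ q = E := by
    rw [hE, ee]; split <;> simp [zero_pow hq0]
  have hpow : (y - E) ^ q = y ^ q - E := by rw [hchar_pd p k d y E, hEq]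
  rw [conj_split, av, bv, ← hcdef, ← hS, ← hy, ← hE, ← hqdef, hpow, mul_assoc]
  have h1 : (f d * y ^ q - y * c + S = 0) ↔
      (c * (y - E) = S + E * (f d - c) + f d * (y ^ q - E)) := by
    constructor <;> intro h <;> linear_combination -h
  have h2 : (c * (y - E) = S + E * (f d - c) + f d * (y ^ q - E)) ↔
      (y - E = c⁻¹ * (S + E * (f d - c)) + c⁻¹ * (f d * (y ^ q - E))) := by
    constructor <;> intro h
    · linear_combination c⁻¹ * h - (y - E) * hcc1
    · linear_combination c * h + (S + E * (f d - c) + f d * (y ^ q - E)) * hcc2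
  exact h1.trans h2


lemma fr_ne (hunit : (f d).orderTop = 0) (m : ℕ) : fr p k f d m ≠ 0 := by
  have h0 : (f d).coeff 0 ≠ 0 := HahnSeries.coeff_orderTop_ne (by exact_mod_cast hunit)
  rw [fr]
  induction m with
  | zero => simpa using h0
  | succ n ih =>
    rw [Function.iterate_succ_apply']
    intro h
    exact ih (by simpa using congrArg (frobeniusEquiv k p) h)

include d in
lemma vge1_term (hint : ∀ i, 0 ≤ (f i).orderTop) (x : ℕ → LaurentSeries k) (i j : ℕ)
    (hx : Vge 1 (x j - ee k j)) :
    Vge 1 (f i * x j ^ p ^ i - x j * HahnSeries.C (fr p k f i j)) := by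
  have hf0 : Vge 0 (f i) := vge_zero_iff.mpr (hint i)
  have hp1 : (1 : ℤ) ≤ (p ^ i : ℕ) := by
    exact_mod_cast Nat.one_le_pow i p (Fact.out : p.Prime).pos
  set z := x j - ee k j with hz
  have hbound1 : Vge 1 (f i * z ^ p ^ i) := by
    have := hf0.mul (hx.pow (p ^ i))
    refine this.mono ?_
    push_cast at hp1 ⊢
    nlinarith
  have hbound2 : Vge 1 (z * HahnSeries.C (fr p k f i j)) := by
    have := hx.mul (vge_C (fr p k f i j))
    simpa using this
  by_cases hj : j = 0
  · subst hj
    have hx0 : x 0 = 1 + z := by rw [hz]; simp [ee]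
    have hfr : fr p k f i 0 = (f i).coeff 0 := rfl
    have hpw : x 0 ^ p ^ i = 1 + z ^ p ^ i := by
      rw [hx0, add_pow_char_pow, one_pow]
    have hsplit : f i * x 0 ^ p ^ i - x 0 * HahnSeries.C (fr p k f i 0)
        = (f i - HahnSeries.C ((f i).coeff 0)) +
          (f i * z ^ p ^ i - z * HahnSeries.C ((f i).coeff 0)) := by
      rw [hpw, hx0, hfr]; ring
    rw [hsplit]
    exact (vge1_fsubC (f i) (hint i)).add (hbound1.sub (by rw [← hfr]; exact hbound2))
  · have hxj : x j = z := by rw [hz, ee, if_neg hj, sub_zero]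
    rw [hxj]
    exact hbound1.sub hbound2

lemma vge1_G (hint : ∀ i, 0 ≤ (f i).orderTop) (x : ℕ → LaurentSeries k) (m : ℕ)
    (hprev : ∀ j, j < m → Vge 1 (x j - ee k j)) : Vge 1 (G p k d f x m) := by
  apply vge_sum
  intro i hi
  rw [Finset.mem_filter, Finset.mem_range] at hi
  exact vge1_term p k d f hint x i _ (hprev (m + i - d) (by omega))

lemma vge0_cinv (m : ℕ) :
    Vge 0 ((HahnSeries.C (fr p k f d m) : LaurentSeries k)⁻¹) := by
  by_cases h : fr p k f d m = 0
  · rw [h, map_zero, inv_zero]; exact vge_zero_series 0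
  · rw [← map_inv₀ (HahnSeries.C : k →+* LaurentSeries k)]
    exact vge_C _

lemma vge1_av (hint : ∀ i, 0 ≤ (f i).orderTop) (x : ℕ → LaurentSeries k) (m : ℕ)
    (hprev : ∀ j, j < m → Vge 1 (x j - ee k j)) : Vge 1 (av p k d f x m) := by
  rw [av]
  have h2 : Vge 1 (G p k d f x m + ee k m * (f d - HahnSeries.C (fr p k f d m))) := by
    refine (vge1_G p k d f hint x m hprev).add ?_
    by_cases hm : m = 0
    · subst hm
      have hfr : fr p k f d 0 = (f d).coeff 0 := rfl
      rw [ee, if_pos rfl, one_mul, hfr]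
      exact vge1_fsubC (f d) (hint d)
    · rw [ee, if_neg hm, zero_mul]
      exact vge_zero_series 1
  simpa using (vge0_cinv p k d f m).mul h2

lemma vge0_bv (hint : ∀ i, 0 ≤ (f i).orderTop) (m : ℕ) : Vge 0 (bv p k d f m) := by
  rw [bv]
  simpa using (vge0_cinv p k d f m).mul (vge_zero_iff.mpr (hint d))

open Classical in
include f in
noncomputable def sol (b a : LaurentSeries k) : LaurentSeries k :=
  if h : ∃ z : LaurentSeries k, Vge 1 z ∧ z = a + b * z ^ (p ^ d) then h.choose else 0

noncomputable def xs : ℕ → ℕ → LaurentSeries k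
  | 0 => fun _ => 0
  | (m + 1) =>
    Function.update (xs m) m
      (ee k m + sol p k d (bv p k d f m) (av p k d f (xs m) m))

noncomputable def XX (m : ℕ) : LaurentSeries k := xs p k d f (m + 1) m

lemma xs_succ (m : ℕ) : xs p k d f (m + 1) =
    Function.update (xs p k d f m) m
      (ee k m + sol p k d (bv p k d f m) (av p k d f (xs p k d f m) m)) := rfl

lemma G_congr (x x' : ℕ → LaurentSeries k) (m : ℕ) (h : ∀ j, j < m → x j = x' j) :
    G p k d f x m = G p k d f x' m := by
  apply Finset.sum_congr rfl
  intro i hi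
  rw [Finset.mem_filter, Finset.mem_range] at hi
  rw [h (m + i - d) (by omega)]

lemma av_congr (x x' : ℕ → LaurentSeries k) (m : ℕ) (h : ∀ j, j < m → x j = x' j) :
    av p k d f x m = av p k d f x' m := by
  rw [av, av, G_congr p k d f x x' m h]

lemma xs_agree : ∀ m j, j < m → xs p k d f m j = XX p k d f j := by
  intro m
  induction m with
  | zero => intro j hj; omega
  | succ m ih =>
    intro j hj
    by_cases hjm : j = m
    · subst hjm; rfl
    · rw [xs_succ, Function.update_of_ne hjm]
      exact ih j (by omega)

lemma hq2 (hd : 0 < d) : 2 ≤ p ^ d := by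
  calc 2 ≤ p := (Fact.out : p.Prime).two_le
  _ = p ^ 1 := (pow_one p).symm
  _ ≤ p ^ d := Nat.pow_le_pow_right (Fact.out : p.Prime).pos hd

lemma XX_spec (hd : 0 < d) (hint : ∀ i, 0 ≤ (f i).orderTop) :
    ∀ m, Vge 1 (XX p k d f m - ee k m) ∧
      XX p k d f m - ee k m =
        av p k d f (XX p k d f) m +
          bv p k d f m * (XX p k d f m - ee k m) ^ (p ^ d) := by
  intro m
  induction m using Nat.strong_induction_on with
  | _ m IH =>
  have hprev : ∀ j, j < m → Vge 1 (XX p k d f j - ee k j) := fun j hj => (IH j hj).1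
  have ha : Vge 1 (av p k d f (XX p k d f) m) := vge1_av p k d f hint _ m hprev
  have hb : Vge 0 (bv p k d f m) := vge0_bv p k d f hint m
  obtain ⟨z, hz, -⟩ := fixedPoint (p ^ d) (hq2 p d hd) (hchar_pd p k d) _ _ hb ha
  have hex : ∃ z : LaurentSeries k, Vge 1 z ∧
      z = av p k d f (XX p k d f) m + bv p k d f m * z ^ (p ^ d) := ⟨z, hz⟩
  have hXXm : XX p k d f m - ee k m =
      sol p k d (bv p k d f m) (av p k d f (XX p k d f) m) := by
    have h1 : XX p k d f m = ee k m +
        sol p k d (bv p k d f m) (av p k d f (xs p k d f m) m) := by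
      show xs p k d f (m + 1) m = _
      rw [xs_succ, Function.update_self]
    rw [av_congr p k d f _ _ m (fun j hj => xs_agree p k d f m j hj)] at h1
    rw [h1]; ring
  rw [hXXm, sol, dif_pos hex]
  exact hex.choose_spec

end Main
end ConjAux

theorem exists_unique_conjugating_series
    (p : ℕ) [Fact p.Prime] (k : Type*) [Field k] [Fintype k] [CharP k p]
    (d : ℕ) (hd : 0 < d) (f : ℕ → LaurentSeries k)
    (hint : ∀ i, 0 ≤ (f i).orderTop)
    (hsupp : ∀ i, d < i → f i = 0)
    (hunit : (f d).orderTop = 0) :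
    ∃! x : ℕ → LaurentSeries k,
      (∀ n, 0 ≤ (x n).orderTop) ∧
      0 < (x 0 - 1).orderTop ∧ (∀ n, 0 < n → 0 < (x n).orderTop) ∧
      ∀ m : ℕ, conjEqCoeff p d f x m = 0 := by
    classical
  refine ⟨ConjAux.XX p k d f, ⟨?_, ?_, ?_, ?_⟩, ?_⟩
  · intro n
    rw [← ConjAux.vge_zero_iff]
    have h1 : ConjAux.Vge 0 (ConjAux.ee k n) := by
      by_cases hn : n = 0
      · subst hn; rw [ConjAux.ee, if_pos rfl]; exact ConjAux.vge_one_one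
      · rw [ConjAux.ee, if_neg hn]; exact ConjAux.vge_zero_series 0
    have h2 := (ConjAux.XX_spec p k d f hd hint n).1.mono (by norm_num : (0:ℤ) ≤ 1)
    simpa using h1.add h2
  · rw [← ConjAux.vge_one_iff]
    have := (ConjAux.XX_spec p k d f hd hint 0).1
    rw [ConjAux.ee, if_pos rfl] at this
    exact this
  · intro n hn
    rw [← ConjAux.vge_one_iff]
    have := (ConjAux.XX_spec p k d f hd hint n).1
    rw [ConjAux.ee, if_neg (by omega), sub_zero] at this
    exact this
  · intro m
    exact (ConjAux.eq_iff p k d f (ConjAux.fr_ne p k d f hunit m) _).mpr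
      (ConjAux.XX_spec p k d f hd hint m).2
  · rintro y ⟨hy0, hy1, hypos, hyeq⟩
    have hyv : ∀ j, ConjAux.Vge 1 (y j - ConjAux.ee k j) := by
      intro j
      by_cases hj : j = 0
      · subst hj; rw [ConjAux.ee, if_pos rfl]; exact ConjAux.vge_one_iff.mpr hy1
      · rw [ConjAux.ee, if_neg hj, sub_zero]
        exact ConjAux.vge_one_iff.mpr (hypos j (Nat.pos_of_ne_zero hj))
    have key : ∀ m, y m = ConjAux.XX p k d f m := by
      intro m
      induction m using Nat.strong_induction_on with
      | _ m IH =>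
      have heq := (ConjAux.eq_iff p k d f (ConjAux.fr_ne p k d f hunit m) y).mp (hyeq m)
      rw [ConjAux.av_congr p k d f y (ConjAux.XX p k d f) m (fun j hj => IH j hj)] at heq
      have hfp := ConjAux.fixedPoint (p ^ d) (ConjAux.hq2 p d hd) (ConjAux.hchar_pd p k d)
        (ConjAux.bv p k d f m) (ConjAux.av p k d f (ConjAux.XX p k d f) m)
        (ConjAux.vge0_bv p k d f hint m)
        (ConjAux.vge1_av p k d f hint (ConjAux.XX p k d f) m
          (fun j _ => (ConjAux.XX_spec p k d f hd hint j).1))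
      have := hfp.unique ⟨hyv m, heq⟩
        ⟨(ConjAux.XX_spec p k d f hd hint m).1, (ConjAux.XX_spec p k d f hd hint m).2⟩
      exact sub_left_inj.mp this
    funext m
    exact key m
end

section
/- With notation as above (f ∈ O_K[τ] with unit top coefficient and degree d > 0, f̄ its residual polynomial lifted to O_K via k ↪ O_K, and x the unique solution of f x = x f̄ with x ≡ 1 mod m_K), one has v(x - 1) ≥ v(f - f̄) > 0, where for a twisted series y = ∑ y_i τ^i one sets v(y) := inf_i v(y_i). -/
section aux

variable {k : Type*} [Field k]

lemma aux_le_orderTop {y : LaurentSeries k} {c : WithTop ℤ}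
    (h : ∀ s : ℤ, (s : WithTop ℤ) < c → y.coeff s = 0) : c ≤ y.orderTop := by
  by_contra hlt
  push_neg at hlt
  have hy : y ≠ 0 := by
    intro h0
    rw [h0, HahnSeries.orderTop_zero] at hlt
    exact not_top_lt hlt
  have ho := HahnSeries.order_eq_orderTop_of_ne_zero hy
  exact HahnSeries.coeff_orderTop_ne ho.symm (h y.order (ho ▸ hlt))

lemma aux_coe_le_orderTop {y : LaurentSeries k} {t : ℤ}
    (h : ∀ s : ℤ, s < t → y.coeff s = 0) : (t : WithTop ℤ) ≤ y.orderTop := by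
  apply aux_le_orderTop
  intro s hs
  exact h s (by exact_mod_cast hs)

lemma aux_pos_orderTop {y : LaurentSeries k}
    (h : ∀ s : ℤ, s ≤ 0 → y.coeff s = 0) : 0 < y.orderTop := by
  by_contra hlt
  push_neg at hlt
  have hy : y ≠ 0 := by
    intro h0
    rw [h0, HahnSeries.orderTop_zero] at hlt
    simp at hlt
  have ho := HahnSeries.order_eq_orderTop_of_ne_zero hy
  have hle : y.order ≤ 0 := by
    have : (y.order : WithTop ℤ) ≤ ((0 : ℤ) : WithTop ℤ) := by
      rw [ho]; exact_mod_cast hlt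
    exact_mod_cast this
  exact HahnSeries.coeff_orderTop_ne ho.symm (h y.order hle)

lemma aux_pow_nonneg {y : LaurentSeries k} (h : 0 ≤ y.orderTop) (n : ℕ) :
    0 ≤ (y ^ n).orderTop := by
  induction n with
  | zero => simp [HahnSeries.orderTop_one]
  | succ n ih =>
    rw [pow_succ]
    refine le_trans ?_ HahnSeries.orderTop_add_le_mul
    calc (0 : WithTop ℤ) = 0 + 0 := by simp
    _ ≤ (y ^ n).orderTop + y.orderTop := add_le_add ih h

lemma aux_pow_le {y : LaurentSeries k} {t : ℤ} (ht : 0 ≤ t)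
    (h : (t : WithTop ℤ) ≤ y.orderTop) {n : ℕ} (hn : 1 ≤ n) :
    (t : WithTop ℤ) ≤ (y ^ n).orderTop := by
  induction n with
  | zero => omega
  | succ n ih =>
    rcases Nat.eq_or_lt_of_le hn with h1 | h1
    · simpa [← h1] using h
    · have ih' := ih (by omega)
      rw [pow_succ]
      refine le_trans ?_ HahnSeries.orderTop_add_le_mul
      calc (t : WithTop ℤ) ≤ ((t + t : ℤ) : WithTop ℤ) := by exact_mod_cast (by omega : t ≤ t + t)
      _ = (t : WithTop ℤ) + (t : WithTop ℤ) := by push_cast; ring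
      _ ≤ (y ^ n).orderTop + y.orderTop := add_le_add ih' h

lemma aux_pow_big {y : LaurentSeries k} {t : ℤ} (ht : 1 ≤ t)
    (h : (t : WithTop ℤ) ≤ y.orderTop) {n : ℕ} (hn : 2 ≤ n) :
    (t : WithTop ℤ) < (y ^ n).orderTop := by
  obtain ⟨m, rfl⟩ : ∃ m, n = m + 1 := ⟨n - 1, by omega⟩
  have ih' := aux_pow_le (by omega) h (n := m) (by omega)
  rw [pow_succ]
  refine lt_of_lt_of_le ?_ HahnSeries.orderTop_add_le_mul
  calc (t : WithTop ℤ) < ((t + t : ℤ) : WithTop ℤ) := by exact_mod_cast (by omega : t < t + t)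
  _ = (t : WithTop ℤ) + (t : WithTop ℤ) := by push_cast; ring
  _ ≤ (y ^ m).orderTop + y.orderTop := add_le_add ih' h

lemma aux_mul_coeff_zero {A B : LaurentSeries k} {t : ℤ}
    (hA : (t : WithTop ℤ) < A.orderTop) (hB : 0 ≤ B.orderTop) :
    (A * B).coeff t = 0 := by
  apply HahnSeries.coeff_eq_zero_of_lt_orderTop
  refine lt_of_lt_of_le hA (le_trans ?_ HahnSeries.orderTop_add_le_mul)
  exact le_add_of_nonneg_right hB

lemma aux_iter_ne (p : ℕ) [Fact p.Prime] [Fintype k] [CharP k p] :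
    ∀ (m : ℕ) (a : k), a ≠ 0 → (⇑(frobeniusEquiv k p).symm)^[m] a ≠ 0 := by
  intro m
  induction m with
  | zero => intro a ha; simpa using ha
  | succ m ih =>
    intro a ha
    rw [Function.iterate_succ_apply]
    apply ih
    intro h0
    exact ha (by simpa using (frobeniusEquiv k p).symm.injective (h0.trans (map_zero _).symm))

end aux

theorem conjugating_series_valuation_bound
    (p : ℕ) [Fact p.Prime] (k : Type*) [Field k] [Fintype k] [CharP k p]
    (d : ℕ) (hd : 0 < d) (f : ℕ → LaurentSeries k)
    (hint : ∀ i, 0 ≤ (f i).orderTop)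
    (hsupp : ∀ i, d < i → f i = 0)
    (hunit : (f d).orderTop = 0)
    (x : ℕ → LaurentSeries k)
    (hxint : ∀ n, 0 ≤ (x n).orderTop)
    (hx0 : 0 < (x 0 - 1).orderTop) (hxpos : ∀ n, 0 < n → 0 < (x n).orderTop)
    (hconj : ∀ m : ℕ, conjEqCoeff p d f x m = 0) :
    (∀ i, 0 < (f i - HahnSeries.C ((f i).coeff 0)).orderTop) ∧
      ∀ c : WithTop ℤ,
        (∀ i, c ≤ (f i - HahnSeries.C ((f i).coeff 0)).orderTop) →
        c ≤ (x 0 - 1).orderTop ∧ ∀ n, 0 < n → c ≤ (x n).orderTop := by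
  haveI : CharP (LaurentSeries k) p :=
    charP_of_injective_ringHom (HahnSeries.C_injective (Γ := ℤ) (R := k)) p
  constructor
  · intro i
    apply aux_pos_orderTop
    intro s hs
    rw [HahnSeries.coeff_sub, HahnSeries.C_apply]
    rcases eq_or_lt_of_le hs with h0 | hneg
    · rw [h0, HahnSeries.coeff_single_same, sub_self]
    · rw [HahnSeries.coeff_single_of_ne hneg.ne,
        HahnSeries.coeff_eq_zero_of_lt_orderTop
          (lt_of_lt_of_le (by exact_mod_cast hneg) (hint i)), sub_zero]
  · intro c hc
    set y : ℕ → LaurentSeries k := fun n => if n = 0 then x 0 - 1 else x n with hy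
    have hxy : ∀ n, x n = (if n = 0 then 1 else 0) + y n := by
      intro n
      by_cases h : n = 0 <;> simp [hy, h]
    have hypos : ∀ n, 0 < (y n).orderTop := by
      intro n
      by_cases h : n = 0
      · simpa [hy, h] using hx0
      · simpa [hy, h] using hxpos n (Nat.pos_of_ne_zero h)
    have had : (f d).coeff 0 ≠ 0 := by
      apply HahnSeries.coeff_orderTop_ne
      rw [hunit]; rfl
    have claim : ∀ N : ℕ, ∀ t : ℤ, t ≤ N → (t : WithTop ℤ) < c → ∀ n, (y n).coeff t = 0 := by
      intro N
      induction N with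
      | zero =>
        intro t ht _ n
        exact HahnSeries.coeff_eq_zero_of_lt_orderTop
          (lt_of_le_of_lt (show (t : WithTop ℤ) ≤ 0 by exact_mod_cast ht) (hypos n))
      | succ N ih =>
        intro t ht htc
        by_cases htN : t ≤ N
        · exact ih t htN htc
        have htpos : 1 ≤ t := by omega
        have htne : t ≠ 0 := by omega
        have hlow : ∀ n, (t : WithTop ℤ) ≤ (y n).orderTop := by
          intro n
          apply aux_coe_le_orderTop
          intro s hst
          exact ih s (by omega) (lt_trans (by exact_mod_cast hst) htc) n
        intro n
        induction n using Nat.strong_induction_on with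
        | _ m ihm =>
        have h0 : ∑ i ∈ (Finset.range (d + 1)).filter (fun i => d ≤ m + i),
            ((f i * (x (m + i - d)) ^ (p ^ i) -
              x (m + i - d) * HahnSeries.C
                ((⇑(frobeniusEquiv k p).symm)^[m + i - d] ((f i).coeff 0))).coeff t) = 0 := by
          have h1 := hconj m
          unfold conjEqCoeff at h1
          have h2 := map_sum (HahnSeries.coeff.addMonoidHom t)
            (fun i => (f i * (x (m + i - d)) ^ (p ^ i) -
              x (m + i - d) * HahnSeries.C
                ((⇑(frobeniusEquiv k p).symm)^[m + i - d] ((f i).coeff 0))))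
            ((Finset.range (d + 1)).filter (fun i => d ≤ m + i))
          rw [h1] at h2
          simpa using h2.symm
        have hterm : ∀ i ∈ (Finset.range (d + 1)).filter (fun i => d ≤ m + i),
            ((f i * (x (m + i - d)) ^ (p ^ i) -
              x (m + i - d) * HahnSeries.C
                ((⇑(frobeniusEquiv k p).symm)^[m + i - d] ((f i).coeff 0))).coeff t) =
            (if i = 0 then ((f i).coeff 0) * (y (m + i - d)).coeff t else 0) -
              (y (m + i - d)).coeff t *
                ((⇑(frobeniusEquiv k p).symm)^[m + i - d] ((f i).coeff 0)) := by
          intro i hi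
          rw [HahnSeries.coeff_sub]
          have hxcoeff : (x (m + i - d)).coeff t = (y (m + i - d)).coeff t := by
            rw [hxy (m + i - d), HahnSeries.coeff_add]
            by_cases hn : m + i - d = 0 <;>
              simp [hn, HahnSeries.coeff_one, htne]
          have hA : (f i * (x (m + i - d)) ^ (p ^ i)).coeff t =
              (if i = 0 then ((f i).coeff 0) * (y (m + i - d)).coeff t else 0) := by
            have hfi : f i = HahnSeries.C ((f i).coeff 0) +
                (f i - HahnSeries.C ((f i).coeff 0)) := by ring
            rw [hfi, add_mul, HahnSeries.coeff_add,
              aux_mul_coeff_zero (lt_of_lt_of_le htc (hc i)) (aux_pow_nonneg (hxint _) _),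
              add_zero, HahnSeries.C_mul_eq_smul, HahnSeries.coeff_smul, smul_eq_mul]
            have hpow : ((x (m + i - d)) ^ (p ^ i)).coeff t =
                (if i = 0 then (y (m + i - d)).coeff t else 0) := by
              rw [hxy (m + i - d), add_pow_char_pow]
              have hE : ((if m + i - d = 0 then (1 : LaurentSeries k) else 0) ^ (p ^ i)).coeff t
                  = 0 := by
                by_cases hn : m + i - d = 0 <;>
                  simp [hn, HahnSeries.coeff_one, htne,
                    zero_pow (pow_ne_zero i (Fact.out (p := p.Prime)).ne_zero)]
              rw [HahnSeries.coeff_add, hE, zero_add]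
              by_cases hi0 : i = 0
              · simp [hi0]
              · rw [if_neg hi0]
                apply HahnSeries.coeff_eq_zero_of_lt_orderTop
                apply aux_pow_big htpos (hlow _)
                calc 2 ≤ p := (Fact.out (p := p.Prime)).two_le
                _ = p ^ 1 := (pow_one p).symm
                _ ≤ p ^ i := Nat.pow_le_pow_right (Fact.out (p := p.Prime)).one_lt.le (by omega)
            rw [hpow]
            by_cases hi0 : i = 0 <;> simp [hi0]
          have hB : (x (m + i - d) * HahnSeries.C
              ((⇑(frobeniusEquiv k p).symm)^[m + i - d] ((f i).coeff 0))).coeff t =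
              (y (m + i - d)).coeff t *
                ((⇑(frobeniusEquiv k p).symm)^[m + i - d] ((f i).coeff 0)) := by
            rw [HahnSeries.C_apply, HahnSeries.coeff_mul_single_zero, hxcoeff]
          rw [hA, hB]
        rw [Finset.sum_congr rfl hterm] at h0
        rw [Finset.sum_eq_single d] at h0
        · rw [if_neg (by omega : ¬ d = 0), Nat.add_sub_cancel, zero_sub, neg_eq_zero] at h0
          rcases mul_eq_zero.mp h0 with h | h
          · exact h
          · exact absurd h (aux_iter_ne p m _ had)
        · intro i hi hid
          rw [Finset.mem_filter, Finset.mem_range] at hi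
          have hn : m + i - d < m := by omega
          rw [ihm _ hn]
          simp
        · intro hd'
          exfalso
          apply hd'
          rw [Finset.mem_filter, Finset.mem_range]
          omega
    have hfin : ∀ n, c ≤ (y n).orderTop := by
      intro n
      apply aux_le_orderTop
      intro s hs
      exact claim s.toNat s (Int.self_le_toNat s) hs n
    constructor
    · have h := hfin 0
      rw [hy] at h
      simpa using h
    · intro n hn
      have h := hfin n
      simp only [hy] at h
      rwa [if_neg (by omega : ¬ n = 0)] at h
end

section
/- Let k be a finite field and K^perf a perfect field extension of k that is not algebraic over k (e.g. the perfection of a local field with residue field k). Let f̄ ∈ k((τ⁻¹)) be a twisted Laurent series not lying in k[[τ⁻¹]] (i.e. having some nonzero coefficient in positive degree). Then any element h ∈ K^perf((τ⁻¹)) commuting with f̄ lies in k((τ⁻¹)). -/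
/-!
STATEMENT 5: Let `k` be a finite field and `Kperf ⊇ k` a perfect field extension of
characteristic `p` that is not algebraic over `k`, with `k` algebraically closed in `Kperf`
(e.g. the perfection of a local field with residue field `k`).  Twisted Laurent series
`∑_{i ∈ ℤ} h_i τ^i` (coefficients vanishing for `i ≫ 0`, commutation `τ^i z = z^{p^i} τ^i`)
are recorded by their coefficient functions; the `ℤ`-indexed Frobenius powers `z ↦ z^{p^i}`
are the `zpow`s of the Frobenius automorphism.  If `f̄` has coefficients in `k` and some
nonzero coefficient in positive degree, then any `h` over `Kperf` commuting with `f̄`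
(coefficientwise identity `f̄ h = h f̄`) has all coefficients in `k`.
-/

open Polynomial

theorem frobEquiv_pow_nat' (p : ℕ) [Fact p.Prime] (Kp : Type*) [Field Kp] [CharP Kp p]
    [PerfectRing Kp p] (n : ℕ) (x : Kp) : (frobeniusEquiv Kp p ^ n) x = x ^ p ^ n := by
  induction n with
  | zero => simp
  | succ n ih =>
    have : (frobeniusEquiv Kp p ^ (n + 1)) x
        = (frobeniusEquiv Kp p ^ n) (frobeniusEquiv Kp p x) := by
      rw [pow_succ]; rfl
    rw [this, frobeniusEquiv_def, map_pow, ih, ← pow_mul, ← pow_succ]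


theorem coeff_mem_of_commute_twisted
    (p : ℕ) [Fact p.Prime] (k : Type*) [Field k] [Fintype k] [CharP k p]
    (Kp : Type*) [Field Kp] [CharP Kp p] [PerfectRing Kp p] [Algebra k Kp]
    (halgclosed : ∀ ξ : Kp, IsAlgebraic k ξ → ∃ c : k, algebraMap k Kp c = ξ)
    (hnotalg : ∃ ξ : Kp, ¬ IsAlgebraic k ξ)
    (f : ℤ → k) (d : ℤ) (hfd : ∀ i, d < i → f i = 0)
    (hfpos : ∃ i : ℤ, 0 < i ∧ f i ≠ 0)
    (h : ℤ → Kp) (e : ℤ) (he : ∀ i, e < i → h i = 0)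
    (hcomm : ∀ t : ℤ,
      ∑ᶠ i : ℤ,
        (algebraMap k Kp (f i) * ((frobeniusEquiv Kp p ^ i) (h (t - i))) -
          h (t - i) * algebraMap k Kp ((frobeniusEquiv k p ^ (t - i)) (f i))) = 0) :
    ∀ j : ℤ, ∃ c : k, algebraMap k Kp c = h j := by
  classical
  have hp2 : 2 ≤ p := (Fact.out : p.Prime).two_le
  set φ := frobeniusEquiv Kp p with hφ
  set R := (algebraMap k Kp).range with hR
  -- the range is stable under all integer powers of Frobenius
  have hbase : ∀ y ∈ R, φ y ∈ R := by
    rintro y ⟨c, rfl⟩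
    exact ⟨c ^ p, by rw [map_pow, frobeniusEquiv_def]⟩
  have hsurj : Function.Surjective (frobenius k p) :=
    Finite.surjective_of_injective (frobenius_inj k p)
  have hinvbase : ∀ y ∈ R, φ⁻¹ y ∈ R := by
    rintro y ⟨c, rfl⟩
    obtain ⟨c', hc'⟩ := hsurj c
    refine ⟨c', ?_⟩
    have h1 : φ (algebraMap k Kp c') = algebraMap k Kp c := by
      rw [hφ, frobeniusEquiv_def, ← map_pow]
      rw [← frobenius_def, hc']
    have h2 : (φ⁻¹ : Kp ≃+* Kp) = φ.symm := rfl
    rw [← h1, h2, RingEquiv.symm_apply_apply]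
  have hfrobR : ∀ (m : ℤ), ∀ y ∈ R, (φ ^ m) y ∈ R := by
    intro m
    induction m using Int.induction_on with
    | zero => intro y hy; simpa using hy
    | succ n ih =>
      intro y hy
      have : (φ ^ ((n : ℤ) + 1)) y = (φ ^ (n : ℤ)) (φ y) := by
        rw [zpow_add_one]; rfl
      rw [this]; exact ih _ (hbase y hy)
    | pred n ih =>
      intro y hy
      have : (φ ^ (-(n : ℤ) - 1)) y = (φ ^ (-(n : ℤ))) (φ⁻¹ y) := by
        rw [zpow_sub_one]; rfl
      rw [this]; exact ih _ (hinvbase y hy)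
  -- the top degree D of f
  obtain ⟨i₀, hi₀pos, hi₀ne⟩ := hfpos
  have hi₀d : i₀ ≤ d := by
    by_contra hlt; exact hi₀ne (hfd i₀ (by omega))
  set T : Finset ℤ := (Finset.Icc i₀ d).filter (fun i => f i ≠ 0) with hT
  have hi₀T : i₀ ∈ T := by
    simp [hT, Finset.mem_filter, Finset.mem_Icc, hi₀d, hi₀ne]
  set D := T.max' ⟨i₀, hi₀T⟩ with hD
  have hDmem : D ∈ T := T.max'_mem _
  have hfD : f D ≠ 0 := (Finset.mem_filter.mp hDmem).2
  have hi₀D : i₀ ≤ D := T.le_max' i₀ hi₀T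
  have hDd : D ≤ d := (Finset.mem_Icc.mp (Finset.mem_filter.mp hDmem).1).2
  have hD1 : 1 ≤ D := le_trans hi₀pos hi₀D
  have hDtop : ∀ i, D < i → f i = 0 := by
    intro i hi
    by_contra hne
    have hid : i ≤ d := by by_contra hlt; exact hne (hfd i (by omega))
    have : i ∈ T := by
      simp [hT, Finset.mem_filter, Finset.mem_Icc, hid, hne]; omega
    exact absurd (T.le_max' i this) (by omega)
  set N := D.toNat with hN
  have hN1 : 1 ≤ N := by omega
  have hDN : (N : ℤ) = D := by omega
  -- main induction
  have key : ∀ n : ℕ, ∀ j : ℤ, e < j + n → h j ∈ R := by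
    intro n
    induction n with
    | zero =>
      intro j hj
      rw [he j (by omega)]
      exact ⟨0, by simp⟩
    | succ n ih =>
      intro j hj
      by_cases hje : e < j + n
      · exact ih j hje
      have hjle : j ≤ e := by omega
      have IH : ∀ j' : ℤ, j < j' → h j' ∈ R := fun j' hj' => ih j' (by omega)
      -- use the commutation relation at t = D + j
      set t := D + j with ht
      set g : ℤ → Kp := fun i =>
        algebraMap k Kp (f i) * ((frobeniusEquiv Kp p ^ i) (h (t - i))) -
          h (t - i) * algebraMap k Kp ((frobeniusEquiv k p ^ (t - i)) (f i)) with hg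
      set s : Finset ℤ := Finset.Icc (t - e) d with hs
      have hsupp : Function.support g ⊆ ↑s := by
        intro i hi
        simp only [Function.mem_support] at hi
        have hfi : f i ≠ 0 := by
          intro h0
          apply hi
          simp [hg, h0]
        have hhi : h (t - i) ≠ 0 := by
          intro h0
          apply hi
          simp [hg, h0]
        have h1 : i ≤ d := by
          by_contra hlt; exact hfi (hfd i (by omega))
        have h2 : t - e ≤ i := by
          by_contra hlt; exact hhi (he _ (by omega))
        simp [hs, Finset.mem_Icc]; omega
      have hsum : ∑ i ∈ s, g i = 0 := by
        rw [← finsum_eq_sum_of_support_subset g hsupp]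
        exact hcomm t
      have hDs : D ∈ s := by simp [hs, Finset.mem_Icc]; omega
      have hsplit : g D + ∑ i ∈ s.erase D, g i = 0 := by
        rw [Finset.add_sum_erase _ _ hDs]; exact hsum
      have hrest : ∑ i ∈ s.erase D, g i ∈ R := by
        refine Subring.sum_mem _ ?_
        intro i hi
        obtain ⟨hiD, his⟩ := Finset.mem_erase.mp hi
        by_cases hfi : f i = 0
        · rw [show g i = 0 by simp [hg, hfi]]
          exact Subring.zero_mem _
        have hiD' : i < D := by
          rcases lt_or_gt_of_ne hiD with h' | h'
          · exact h'
          · exact absurd (hDtop i h') hfi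
        have hmem : h (t - i) ∈ R := IH _ (by omega)
        refine Subring.sub_mem _ (Subring.mul_mem _ ⟨f i, rfl⟩ (hfrobR i _ hmem))
          (Subring.mul_mem _ hmem ⟨_, rfl⟩)
      have hgD : -(g D) ∈ R := by
        rw [neg_eq_of_add_eq_zero_right hsplit]
        exact hrest
      obtain ⟨a0, ha0⟩ := hgD
      -- unfold g D
      have htD : t - D = j := by omega
      set c0 : k := (frobeniusEquiv k p ^ j) (f D) with hc0
      set x := h j with hx
      have hgDval : g D = algebraMap k Kp (f D) * x ^ p ^ N - x * algebraMap k Kp c0 := by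
        rw [hg]
        simp only [htD]
        congr 1
        rw [← hDN, zpow_natCast]
        rw [frobEquiv_pow_nat']
      have heq : algebraMap k Kp (f D) * x ^ p ^ N - algebraMap k Kp c0 * x
          + algebraMap k Kp a0 = 0 := by
        rw [ha0, hgDval]; ring
      -- x is algebraic over k
      set P : k[X] := C (f D) * X ^ (p ^ N) - C c0 * X + C a0 with hP
      have hpN : 1 < p ^ N := by
        calc 1 < p := by omega
        _ ≤ p ^ N := Nat.le_self_pow (by omega) p
      have hcoeff : P.coeff (p ^ N) = f D := by
        have h1 : ¬ (1 : ℕ) = p ^ N := by omega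
        have h2 : ¬ (p ^ N : ℕ) = 0 := by omega
        have h3 : p ≠ 0 := by omega
        simp [hP, coeff_X, coeff_C, coeff_X_pow, h1, h2, h3]
      have hPne : P ≠ 0 := by
        intro h0
        rw [h0, coeff_zero] at hcoeff
        exact hfD hcoeff.symm
      have hxalg : IsAlgebraic k x := by
        refine ⟨P, hPne, ?_⟩
        rw [hP]
        simp only [map_add, map_sub, map_mul, aeval_C, aeval_X_pow, aeval_X]
        exact heq
      exact (halgclosed x hxalg : h j ∈ R)
  intro j
  exact key ((e - j).toNat + 1) j (by omega)
end

section
/- Let k be a finite field of order p^d, B = 𝔽_p[s], and ω the basic Drinfeld B-module with ω_s = τ^d over k. For n | n', the trace-type maps ω_{(s^{n'}-1)/(s^n-1)}: k_{n'} → k_n (where k_m ⊂ k^alg is the field of p^{md} elements, equal to ker ω_{s^m-1}) form an inverse system, and there is an isomorphism of the restricted adelic Tate module T°_ad(ω) = Hom_B(B_{(s)}/B, (k^alg, ω)) with lim←_n k_n, sending ℓ to the system (ζ_n) with ζ_n = ℓ(1/(s^n-1) + B). -/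
/-!
STATEMENT 18: Let `k` be the finite field of order `p^d`, `k^alg = AlgebraicClosure k`,
`B = 𝔽_p[s] = Polynomial (ZMod p)`, and `ω` the basic Drinfeld `B`-module: `b ∈ B` acts on
`k^alg` by the additive polynomial `b(τ^d)`, i.e. `evω b y = ∑ bᵢ y^{p^{d·i}}`.
Let `B_{(s)}` be the localization of `B` at the prime `(s) = (X)` and `Q = B_{(s)}/B`.
Set `k_m = ker(ω_{s^m - 1}) = {x | x^{p^{dm}} = x}` (the field of `p^{md}` elements), and for
`n ∣ n'` let `ω_{(s^{n'}-1)/(s^n-1)}` be the trace-type map.  Claims: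
(i) these maps send `k_{n'}` into `k_n` (inverse system);
(ii) every `B`-linear map `ℓ : Q → (k^alg, ω)` (an additive map satisfying
`ℓ([b·u]) = evω b (ℓ [u])`) induces a compatible system `ζ` with
`ζ_n = ℓ([1/(s^n-1)])` (characterized by `(s^n-1)·u = 1 → ζ_n = ℓ [u]`);
(iii) conversely each compatible system comes from a unique such `ℓ`; i.e. evaluation is an
isomorphism `T°_ad(ω) = Hom_B(B_{(s)}/B, (k^alg, ω)) ≅ lim←_n k_n`.
-/

noncomputable section

variable (p d : ℕ) [Fact p.Prime] (k : Type) [Field k] [Fintype k] [CharP k p]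

instance : CharP (AlgebraicClosure k) p :=
  charP_of_injective_algebraMap (algebraMap k (AlgebraicClosure k)).injective p

instance : (Ideal.span {(Polynomial.X : Polynomial (ZMod p))}).IsPrime :=
  (Ideal.span_singleton_prime Polynomial.X_ne_zero).mpr Polynomial.prime_X

/-- `B_{(s)}`: the localization of `B = 𝔽_p[s]` at the prime ideal `(s)`. -/
abbrev BLoc := Localization.AtPrime (Ideal.span {(Polynomial.X : Polynomial (ZMod p))})

/-- The image of `B` in `B_{(s)}`, as an additive subgroup. -/
def BImage : AddSubgroup (BLoc p) :=
  (algebraMap (Polynomial (ZMod p)) (BLoc p)).range.toAddSubgroup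

/-- `Q = B_{(s)}/B`. -/
abbrev QMod := BLoc p ⧸ BImage p

/-- The action of `b ∈ B` on `k^alg` through the basic Drinfeld module `ω_s = τ^d`:
`evω b y = ∑ᵢ bᵢ · y^{p^{d·i}}`. -/
def evω (b : Polynomial (ZMod p)) (y : AlgebraicClosure k) : AlgebraicClosure k :=
  ∑ i ∈ Finset.range (b.natDegree + 1),
    (ZMod.castHom (dvd_refl p) (AlgebraicClosure k)) (b.coeff i) * y ^ p ^ (d * i)

/-- `k_m = ker ω_{s^m - 1}`, the subfield of `p^{dm}` elements of `k^alg`. -/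
def kLevel (m : ℕ) : Set (AlgebraicClosure k) := {x | x ^ p ^ (d * m) = x}

/-- The exact quotient `(s^{n'} - 1)/(s^n - 1)` in `B`. -/
def trPoly (n n' : ℕ) : Polynomial (ZMod p) :=
  (Polynomial.X ^ n' - 1) / (Polynomial.X ^ n - 1)

/-! ### Auxiliary machinery -/

section Aux

set_option linter.unusedSectionVars false

variable (p d : ℕ) [Fact p.Prime] (k : Type) [Field k] [Fintype k] [CharP k p]

/-- Frobenius of `k^alg` as an additive endomorphism. -/
def frobEnd : AddMonoid.End (AlgebraicClosure k) :=
  (frobenius (AlgebraicClosure k) p).toAddMonoidHom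

lemma frobEnd_pow_apply (m : ℕ) : ∀ y : AlgebraicClosure k,
    ((frobEnd p k) ^ m) y = y ^ p ^ m := by
  induction m with
  | zero => intro y; simp
  | succ n ih =>
      intro y
      rw [pow_succ]
      show ((frobEnd p k) ^ n) (frobEnd p k y) = _
      rw [ih]
      show (y ^ p) ^ p ^ n = _
      rw [← pow_mul, pow_succ, mul_comm]

lemma zmod_pow_pow (a : ZMod p) (m : ℕ) : a ^ p ^ m = a := by
  induction m with
  | zero => simp
  | succ n ih => rw [pow_succ, pow_mul, ih, ZMod.pow_card]

/-- Scalar multiplication by `𝔽_p` as a ring hom into additive endomorphisms. -/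
def sHom : ZMod p →+* AddMonoid.End (AlgebraicClosure k) where
  toFun c := AddMonoidHom.mulLeft ((ZMod.castHom (dvd_refl p) (AlgebraicClosure k)) c)
  map_one' := AddMonoidHom.ext fun y => by show _ * _ = y; simp
  map_mul' a b := AddMonoidHom.ext fun y => by
    show (ZMod.castHom (dvd_refl p) (AlgebraicClosure k)) (a*b) * y
      = (ZMod.castHom (dvd_refl p) (AlgebraicClosure k)) a
        * ((ZMod.castHom (dvd_refl p) (AlgebraicClosure k)) b * y)
    rw [map_mul, mul_assoc]
  map_zero' := AddMonoidHom.ext fun y => by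
    show (ZMod.castHom (dvd_refl p) (AlgebraicClosure k)) 0 * y = (0 : AddMonoid.End _) y
    simp
  map_add' a b := AddMonoidHom.ext fun y => by
    show (ZMod.castHom (dvd_refl p) (AlgebraicClosure k)) (a+b) * y
      = (ZMod.castHom (dvd_refl p) (AlgebraicClosure k)) a * y
        + (ZMod.castHom (dvd_refl p) (AlgebraicClosure k)) b * y
    rw [map_add, add_mul]

lemma sHom_commute (a : ZMod p) : Commute (sHom p k a) ((frobEnd p k) ^ d) :=
  AddMonoidHom.ext fun y => by
    show ((ZMod.castHom (dvd_refl p) (AlgebraicClosure k)) a) * ((frobEnd p k) ^ d) y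
        = ((frobEnd p k) ^ d) (((ZMod.castHom (dvd_refl p) (AlgebraicClosure k)) a) * y)
    rw [frobEnd_pow_apply, frobEnd_pow_apply, mul_pow, ← map_pow, zmod_pow_pow]

/-- `ω` as a ring hom `B → End_add(k^alg)`. -/
def Φ : Polynomial (ZMod p) →+* AddMonoid.End (AlgebraicClosure k) :=
  Polynomial.eval₂RingHom' (sHom p k) ((frobEnd p k) ^ d) (fun a => sHom_commute p d k a)

lemma evω_eq (b : Polynomial (ZMod p)) (y : AlgebraicClosure k) :
    evω p d k b y = Φ p d k b y := by
  show _ = Polynomial.eval₂ (sHom p k) ((frobEnd p k) ^ d) b y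
  rw [Polynomial.eval₂_eq_sum_range, evω]; erw [AddMonoidHom.finset_sum_apply]
  refine Finset.sum_congr rfl fun i _ => ?_
  show _ = (sHom p k (b.coeff i) * ((frobEnd p k) ^ d) ^ i) y
  rw [← pow_mul]
  show _ = (ZMod.castHom (dvd_refl p) (AlgebraicClosure k)) (b.coeff i) * ((frobEnd p k) ^ (d*i)) y
  rw [frobEnd_pow_apply]

lemma Φ_X : Φ p d k Polynomial.X = (frobEnd p k) ^ d := by
  show Polynomial.eval₂ _ _ _ = _
  exact Polynomial.eval₂_X _ _

lemma evω_mul (a b : Polynomial (ZMod p)) (y : AlgebraicClosure k) :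
    evω p d k (a * b) y = evω p d k a (evω p d k b y) := by
  rw [evω_eq, evω_eq, evω_eq, map_mul]; rfl

lemma evω_add_poly (a b : Polynomial (ZMod p)) (y : AlgebraicClosure k) :
    evω p d k (a + b) y = evω p d k a y + evω p d k b y := by
  rw [evω_eq, evω_eq, evω_eq, map_add]; rfl

lemma evω_map_zero (b : Polynomial (ZMod p)) : evω p d k b 0 = 0 := by
  rw [evω_eq]; exact map_zero _

lemma evω_one (y : AlgebraicClosure k) : evω p d k 1 y = y := by
  rw [evω_eq, map_one]; rfl

lemma evω_zero (y : AlgebraicClosure k) : evω p d k 0 y = 0 := by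
  rw [evω_eq, map_zero]; rfl

lemma evω_X_pow_sub_one (n : ℕ) (y : AlgebraicClosure k) :
    evω p d k (Polynomial.X ^ n - 1) y = y ^ p ^ (d * n) - y := by
  rw [evω_eq, map_sub, map_pow, map_one, Φ_X, ← pow_mul]
  show ((frobEnd p k) ^ (d * n)) y - (1 : AddMonoid.End _) y = _
  rw [frobEnd_pow_apply]; rfl

lemma mem_kLevel_iff (n : ℕ) (x : AlgebraicClosure k) :
    x ∈ kLevel p d k n ↔ evω p d k (Polynomial.X ^ n - 1) x = 0 := by
  rw [evω_X_pow_sub_one, sub_eq_zero]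
  exact Iff.rfl

/-! Polynomial / localization lemmas -/

instance : Fact (1 < p) := ⟨(Fact.out : p.Prime).one_lt⟩

lemma dvd_X_pow_sub_one (f : Polynomial (ZMod p)) (hf : f.coeff 0 ≠ 0) :
    ∃ n : ℕ, 0 < n ∧ f ∣ Polynomial.X ^ n - 1 := by
  have hf0 : f ≠ 0 := fun h => hf (by simp [h])
  have hinv : (AdjoinRoot.mk f Polynomial.X) *
      (AdjoinRoot.mk f (-(Polynomial.C (f.coeff 0)⁻¹) * f.divX)) = 1 := by
    rw [← map_mul, ← map_one (AdjoinRoot.mk f), AdjoinRoot.mk_eq_mk]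
    have key : Polynomial.X * (-(Polynomial.C (f.coeff 0)⁻¹) * f.divX) - 1
        = -(Polynomial.C (f.coeff 0)⁻¹) * f := by
      have hd : Polynomial.X * f.divX + Polynomial.C (f.coeff 0) = f := f.X_mul_divX_add
      have hC : Polynomial.C (f.coeff 0)⁻¹ * Polynomial.C (f.coeff 0) = 1 := by
        rw [← Polynomial.C_mul, inv_mul_cancel₀ hf, Polynomial.C_1]
      calc Polynomial.X * (-(Polynomial.C (f.coeff 0)⁻¹) * f.divX) - 1
          = -(Polynomial.C (f.coeff 0)⁻¹) * (Polynomial.X * f.divX + Polynomial.C (f.coeff 0))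
            + (Polynomial.C (f.coeff 0)⁻¹ * Polynomial.C (f.coeff 0) - 1) := by ring
        _ = -(Polynomial.C (f.coeff 0)⁻¹) * f := by rw [hd, hC]; ring
    rw [key]
    exact Dvd.intro _ (mul_comm _ _)
  have hu : IsUnit (AdjoinRoot.mk f Polynomial.X) := IsUnit.of_mul_eq_one _ hinv
  have : Finite (AdjoinRoot f) := by
    have pb := AdjoinRoot.powerBasis hf0
    have : Module.Finite (ZMod p) (AdjoinRoot f) := Module.Finite.of_basis pb.basis
    exact Module.finite_of_finite (ZMod p)
  obtain ⟨u, hu⟩ := hu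
  refine ⟨orderOf u, orderOf_pos u, ?_⟩
  have : AdjoinRoot.mk f (Polynomial.X ^ orderOf u - 1) = 0 := by
    rw [map_sub, map_pow, map_one, ← hu, ← Units.val_pow_eq_pow_val, pow_orderOf_eq_one]
    simp
  exact (AdjoinRoot.mk_eq_zero).mp this

lemma mem_primeCompl_iff (f : Polynomial (ZMod p)) :
    f ∈ (Ideal.span {(Polynomial.X : Polynomial (ZMod p))}).primeCompl ↔ f.coeff 0 ≠ 0 := by
  have : f ∈ (Ideal.span {(Polynomial.X : Polynomial (ZMod p))}).primeCompl
      ↔ f ∉ Ideal.span {(Polynomial.X : Polynomial (ZMod p))} := Iff.rfl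
  rw [this, Ideal.mem_span_singleton, Polynomial.X_dvd_iff]

lemma X_pow_sub_one_mem (n : ℕ) (hn : 0 < n) :
    ((Polynomial.X : Polynomial (ZMod p)) ^ n - 1)
      ∈ (Ideal.span {(Polynomial.X : Polynomial (ZMod p))}).primeCompl := by
  rw [mem_primeCompl_iff, Polynomial.coeff_sub, Polynomial.coeff_X_pow, Polynomial.coeff_one]
  simp [Nat.pos_iff_ne_zero.mp hn, (Nat.pos_iff_ne_zero.mp hn : n ≠ 0).symm]

lemma X_pow_sub_one_ne_zero' (n : ℕ) (hn : 0 < n) :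
    ((Polynomial.X : Polynomial (ZMod p)) ^ n - 1) ≠ 0 := by
  have := Polynomial.monic_X_pow_sub_C (1 : ZMod p) (Nat.pos_iff_ne_zero.mp hn)
  rw [Polynomial.C_1] at this
  exact this.ne_zero

lemma trPoly_mul {n N : ℕ} (hn : 0 < n) (h : n ∣ N) :
    ((Polynomial.X : Polynomial (ZMod p)) ^ n - 1) * trPoly p n N = Polynomial.X ^ N - 1 := by
  obtain ⟨c, rfl⟩ := h
  have hdvd : ((Polynomial.X : Polynomial (ZMod p)) ^ n - 1) ∣ Polynomial.X ^ (n * c) - 1 := by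
    have := sub_dvd_pow_sub_pow ((Polynomial.X : Polynomial (ZMod p)) ^ n) 1 c
    rwa [one_pow, ← pow_mul] at this
  exact EuclideanDomain.mul_div_cancel' (X_pow_sub_one_ne_zero' p n hn) hdvd

lemma algebraMap_BLoc_injective :
    Function.Injective (algebraMap (Polynomial (ZMod p)) (BLoc p)) :=
  IsLocalization.injective (BLoc p)
    (Ideal.span {(Polynomial.X : Polynomial (ZMod p))}).primeCompl_le_nonZeroDivisors

lemma exists_inv (n : ℕ) (hn : 0 < n) : ∃ u : BLoc p,
    algebraMap (Polynomial (ZMod p)) (BLoc p) (Polynomial.X ^ n - 1) * u = 1 := by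
  have := IsLocalization.map_units (BLoc p)
    (⟨Polynomial.X ^ n - 1, X_pow_sub_one_mem p n hn⟩ :
      (Ideal.span {(Polynomial.X : Polynomial (ZMod p))}).primeCompl)
  exact this.exists_right_inv

lemma locInv_unique {a u u' : BLoc p} (h : a * u = 1) (h' : a * u' = 1) : u = u' := by
  calc u = (a * u') * u := by rw [h']; ring
    _ = (a * u) * u' := by ring
    _ = u' := by rw [h]; ring

lemma rep_exists (x : BLoc p) : ∃ (b : Polynomial (ZMod p)) (n : ℕ), 0 < n ∧
    algebraMap (Polynomial (ZMod p)) (BLoc p) (Polynomial.X ^ n - 1) * x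
      = algebraMap (Polynomial (ZMod p)) (BLoc p) b := by
  obtain ⟨b, s, hs⟩ := IsLocalization.exists_mk'_eq
    (Ideal.span {(Polynomial.X : Polynomial (ZMod p))}).primeCompl x
  obtain ⟨n, hn, g, hg⟩ := dvd_X_pow_sub_one p s ((mem_primeCompl_iff p s).mp s.2)
  refine ⟨g * b, n, hn, ?_⟩
  rw [← hs, hg, map_mul, map_mul]
  rw [mul_comm (algebraMap _ _ (s : Polynomial (ZMod p))) (algebraMap _ _ g), mul_assoc]
  rw [IsLocalization.mk'_spec' (BLoc p) b s]

lemma mk_one_eq_zero : (QuotientAddGroup.mk (1 : BLoc p) : QMod p) = 0 := by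
  rw [QuotientAddGroup.eq_zero_iff]
  exact ⟨1, by simp⟩

lemma rep_lift (p : ℕ) [Fact p.Prime] {x : BLoc p} {b : Polynomial (ZMod p)} {n N : ℕ}
    (hn : 0 < n) (hnN : n ∣ N)
    (hb : algebraMap (Polynomial (ZMod p)) (BLoc p) (Polynomial.X ^ n - 1) * x
      = algebraMap (Polynomial (ZMod p)) (BLoc p) b) :
    algebraMap (Polynomial (ZMod p)) (BLoc p) (Polynomial.X ^ N - 1) * x
      = algebraMap (Polynomial (ZMod p)) (BLoc p) (trPoly p n N * b) := by
  rw [← trPoly_mul p hn hnN, map_mul, mul_comm (algebraMap _ _ (Polynomial.X ^ n - 1)),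
    mul_assoc, hb, ← map_mul]

end Aux

/-- `B`-linearity of an additive map `ℓ : Q → k^alg` for the module structure via `ω`. -/
def IsOmegaLinear (ℓ : QMod p →+ AlgebraicClosure k) : Prop :=
  ∀ (b : Polynomial (ZMod p)) (u : BLoc p),
    ℓ (QuotientAddGroup.mk (algebraMap (Polynomial (ZMod p)) (BLoc p) b * u)) =
      evω p d k b (ℓ (QuotientAddGroup.mk u))

/-- A compatible system `(ζ_n)_{n ≥ 1}` in `lim←_n k_n` for the trace-type transition maps. -/
def IsCompat (ζ : ℕ → AlgebraicClosure k) : Prop :=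
  (∀ n : ℕ, 0 < n → ζ n ∈ kLevel p d k n) ∧
    ∀ n n' : ℕ, 0 < n → 0 < n' → n ∣ n' → evω p d k (trPoly p n n') (ζ n') = ζ n

theorem basic_drinfeld_tate_module_as_inverse_limit
    (hk : Fintype.card k = p ^ d) :
    -- (i) the trace-type maps form an inverse system on the `k_n`:
    (∀ n n' : ℕ, 0 < n → 0 < n' → n ∣ n' →
      ∀ x ∈ kLevel p d k n', evω p d k (trPoly p n n') x ∈ kLevel p d k n) ∧
    -- (ii) each `B`-linear `ℓ` induces a compatible system `ζ_n = ℓ([1/(s^n-1)])`: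
    (∀ ℓ : QMod p →+ AlgebraicClosure k, IsOmegaLinear p d k ℓ →
      ∃ ζ : ℕ → AlgebraicClosure k, IsCompat p d k ζ ∧
        ∀ (n : ℕ) (u : BLoc p), 0 < n →
          algebraMap (Polynomial (ZMod p)) (BLoc p) (Polynomial.X ^ n - 1) * u = 1 →
          ℓ (QuotientAddGroup.mk u) = ζ n) ∧
    -- (iii) every compatible system comes from a unique `B`-linear `ℓ`:
    (∀ ζ : ℕ → AlgebraicClosure k, IsCompat p d k ζ →
      ∃! ℓ : {ℓ : QMod p →+ AlgebraicClosure k // IsOmegaLinear p d k ℓ},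
        ∀ (n : ℕ) (u : BLoc p), 0 < n →
          algebraMap (Polynomial (ZMod p)) (BLoc p) (Polynomial.X ^ n - 1) * u = 1 →
          (ℓ : QMod p →+ AlgebraicClosure k) (QuotientAddGroup.mk u) = ζ n) := by
  classical
  refine ⟨?_, ?_, ?_⟩
  · -- (i)
    intro n n' hn hn' hdvd x hx
    rw [mem_kLevel_iff] at hx ⊢
    rw [← evω_mul, trPoly_mul p hn hdvd]
    exact hx
  · -- (ii)
    intro ℓ hℓ
    have huspec : ∀ n, ∀ hn : 0 < n,
        algebraMap (Polynomial (ZMod p)) (BLoc p) (Polynomial.X ^ n - 1)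
          * (exists_inv p n hn).choose = 1 := fun n hn => (exists_inv p n hn).choose_spec
    set u : ℕ → BLoc p := fun n => if h : 0 < n then (exists_inv p n h).choose else 0 with hu
    have huspec' : ∀ n, ∀ hn : 0 < n,
        algebraMap (Polynomial (ZMod p)) (BLoc p) (Polynomial.X ^ n - 1) * u n = 1 := by
      intro n hn
      simp only [hu, dif_pos hn]
      exact huspec n hn
    refine ⟨fun n => ℓ (QuotientAddGroup.mk (u n)), ⟨?_, ?_⟩, ?_⟩
    · intro n hn
      rw [mem_kLevel_iff, ← hℓ (Polynomial.X ^ n - 1) (u n), huspec' n hn, mk_one_eq_zero,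
        map_zero]
    · intro n n' hn hn' hdvd
      rw [← hℓ (trPoly p n n') (u n')]
      have : algebraMap (Polynomial (ZMod p)) (BLoc p) (trPoly p n n') * u n' = u n := by
        refine locInv_unique p ?_ (huspec' n hn)
        rw [← mul_assoc, ← map_mul, trPoly_mul p hn hdvd, huspec' n' hn']
      rw [this]
    · intro n v hn hv
      rw [locInv_unique p hv (huspec' n hn)]
  · -- (iii)
    intro ζ hζ
    obtain ⟨hmem, htrans⟩ := hζ
    -- well-definedness
    have wd : ∀ (x : BLoc p) (b c : Polynomial (ZMod p)) (n m : ℕ), 0 < n → 0 < m →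
        algebraMap (Polynomial (ZMod p)) (BLoc p) (Polynomial.X ^ n - 1) * x
          = algebraMap (Polynomial (ZMod p)) (BLoc p) b →
        algebraMap (Polynomial (ZMod p)) (BLoc p) (Polynomial.X ^ m - 1) * x
          = algebraMap (Polynomial (ZMod p)) (BLoc p) c →
        evω p d k b (ζ n) = evω p d k c (ζ m) := by
      intro x b c n m hn hm hb hc
      set N := n * m with hN
      have hNpos : 0 < N := Nat.mul_pos hn hm
      have hnN : n ∣ N := Dvd.intro m rfl
      have hmN : m ∣ N := Dvd.intro_left n rfl
      have hb' := rep_lift p hn hnN hb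
      have hc' := rep_lift p hm hmN hc
      have heq : trPoly p n N * b = trPoly p m N * c :=
        algebraMap_BLoc_injective p (hb'.symm.trans hc')
      have e1 : evω p d k b (ζ n) = evω p d k (trPoly p n N * b) (ζ N) := by
        rw [← htrans n N hn hNpos hnN, ← evω_mul, mul_comm]
      have e2 : evω p d k c (ζ m) = evω p d k (trPoly p m N * c) (ζ N) := by
        rw [← htrans m N hm hNpos hmN, ← evω_mul, mul_comm]
      rw [e1, e2, heq]
    have main : ∀ x : BLoc p, ∃ v : AlgebraicClosure k,
        ∀ (b : Polynomial (ZMod p)) (n : ℕ), 0 < n →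
          algebraMap (Polynomial (ZMod p)) (BLoc p) (Polynomial.X ^ n - 1) * x
            = algebraMap (Polynomial (ZMod p)) (BLoc p) b →
          evω p d k b (ζ n) = v := by
      intro x
      obtain ⟨b, n, hn, hb⟩ := rep_exists p x
      exact ⟨evω p d k b (ζ n), fun c m hm hc => wd x c b m n hm hn hc hb⟩
    choose F hF using main
    have F_add : ∀ x y : BLoc p, F (x + y) = F x + F y := by
      intro x y
      obtain ⟨b, n, hn, hb⟩ := rep_exists p x
      obtain ⟨c, m, hm, hc⟩ := rep_exists p y
      set N := n * m with hN
      have hNpos : 0 < N := Nat.mul_pos hn hm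
      have hnN : n ∣ N := Dvd.intro m rfl
      have hmN : m ∣ N := Dvd.intro_left n rfl
      have hb' := rep_lift p hn hnN hb
      have hc' := rep_lift p hm hmN hc
      have hxy : algebraMap (Polynomial (ZMod p)) (BLoc p) (Polynomial.X ^ N - 1) * (x + y)
          = algebraMap (Polynomial (ZMod p)) (BLoc p)
              (trPoly p n N * b + trPoly p m N * c) := by
        rw [mul_add, hb', hc', ← map_add]
      rw [← hF (x + y) _ N hNpos hxy, ← hF x _ N hNpos hb', ← hF y _ N hNpos hc',
        evω_add_poly]
    set ℓ0 : BLoc p →+ AlgebraicClosure k := AddMonoidHom.mk' F F_add with hℓ0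
    have hkill : ∀ x ∈ BImage p, ℓ0 x = 0 := by
      intro x hx
      obtain ⟨b, hb⟩ := hx
      have hrep : algebraMap (Polynomial (ZMod p)) (BLoc p) (Polynomial.X ^ 1 - 1) * x
          = algebraMap (Polynomial (ZMod p)) (BLoc p) ((Polynomial.X ^ 1 - 1) * b) := by
        rw [← hb, ← map_mul]
      show F x = 0
      rw [← hF x _ 1 one_pos hrep, mul_comm, evω_mul]
      have : evω p d k (Polynomial.X ^ 1 - 1) (ζ 1) = 0 :=
        (mem_kLevel_iff p d k 1 (ζ 1)).mp (hmem 1 one_pos)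
      rw [this, evω_map_zero]
    set ℓ : QMod p →+ AlgebraicClosure k := QuotientAddGroup.lift (BImage p) ℓ0 hkill with hℓ
    have hlmk : ∀ x : BLoc p, ℓ (QuotientAddGroup.mk x) = F x := fun x => rfl
    have hlin : IsOmegaLinear p d k ℓ := by
      intro b v
      rw [hlmk, hlmk]
      obtain ⟨c, n, hn, hc⟩ := rep_exists p v
      have h2 : algebraMap (Polynomial (ZMod p)) (BLoc p) (Polynomial.X ^ n - 1)
          * (algebraMap (Polynomial (ZMod p)) (BLoc p) b * v)
          = algebraMap (Polynomial (ZMod p)) (BLoc p) (b * c) := by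
        rw [mul_left_comm, hc, ← map_mul]
      rw [← hF _ _ n hn h2, ← hF v _ n hn hc, evω_mul]
    have hval : ∀ (n : ℕ) (v : BLoc p), 0 < n →
        algebraMap (Polynomial (ZMod p)) (BLoc p) (Polynomial.X ^ n - 1) * v = 1 →
        ℓ (QuotientAddGroup.mk v) = ζ n := by
      intro n v hn hv
      have h1 : algebraMap (Polynomial (ZMod p)) (BLoc p) (Polynomial.X ^ n - 1) * v
          = algebraMap (Polynomial (ZMod p)) (BLoc p) 1 := by rw [hv, map_one]
      rw [hlmk, ← hF v 1 n hn h1, evω_one]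
    refine ⟨⟨ℓ, hlin⟩, hval, ?_⟩
    intro L hL
    have key : ∀ (M M' : QMod p →+ AlgebraicClosure k), IsOmegaLinear p d k M →
        IsOmegaLinear p d k M' →
        (∀ (n : ℕ) (v : BLoc p), 0 < n →
          algebraMap (Polynomial (ZMod p)) (BLoc p) (Polynomial.X ^ n - 1) * v = 1 →
          M (QuotientAddGroup.mk v) = ζ n) →
        (∀ (n : ℕ) (v : BLoc p), 0 < n →
          algebraMap (Polynomial (ZMod p)) (BLoc p) (Polynomial.X ^ n - 1) * v = 1 →
          M' (QuotientAddGroup.mk v) = ζ n) →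
        ∀ x : BLoc p, M (QuotientAddGroup.mk x) = M' (QuotientAddGroup.mk x) := by
      intro M M' hM hM' hMv hMv' x
      obtain ⟨b, n, hn, hb⟩ := rep_exists p x
      obtain ⟨v, hv⟩ := exists_inv p n hn
      have hx : x = algebraMap (Polynomial (ZMod p)) (BLoc p) b * v := by
        have h1 : x * (algebraMap (Polynomial (ZMod p)) (BLoc p) (Polynomial.X ^ n - 1) * v)
            = algebraMap (Polynomial (ZMod p)) (BLoc p) b * v := by
          rw [← mul_assoc, mul_comm x, hb]
        calc x = x * (algebraMap (Polynomial (ZMod p)) (BLoc p) (Polynomial.X ^ n - 1) * v) := by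
              rw [hv, mul_one]
          _ = algebraMap (Polynomial (ZMod p)) (BLoc p) b * v := h1
      rw [hx, hM b v, hM' b v, hMv n v hn hv, hMv' n v hn hv]
    apply Subtype.ext
    apply AddMonoidHom.ext
    intro q
    refine QuotientAddGroup.induction_on q (fun x => ?_)
    exact key L.1 ℓ L.2 hlin hL hval x


end
end

section
/- Let A_p = 𝔽_p-coefficient completion of A at a maximal ideal 𝔭 different from the characteristic ideal of φ̄, and let R = k[τ] with R° = k[τ^{±1}], viewed as A-modules via a Drinfeld module φ̄: A ↪ R whose characteristic ideal (the kernel of the induced map A → R/Rτ ≅ k) is 𝔭₀. Then for any prime 𝔭 ≠ 𝔭₀ of A, the inclusion R ↪ R° induces an isomorphism A_𝔭 ⊗_A R ≅ A_𝔭 ⊗_A R°. -/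
/-!
STATEMENT 19: Let `A` be a Drinfeld coefficient ring (a Dedekind domain of characteristic
`p`), `φ̄ : A ↪ R` a Drinfeld module over the finite field `k` into the twisted polynomial
ring `R = k[τ]`, and `Rcirc = k[τ^{±1}] = ⋃ₙ R τ^{-n}`.  Here `R`, `Rcirc` are abstract rings with
an injective embedding `ι : R → Rcirc`, a distinguished element `τ ∈ R` whose image is a unit
and such that every element of `Rcirc` lands in `ι R` after right multiplication by a power of
`ι τ`; `R` and `Rcirc` are left `A`-modules via left multiplication by `φ̄ a` (`Module.compHom`).
The residue ring `R/Rτ ≅ k` is finite, and the characteristic ideal `𝔭₀` is the kernel of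
`A → R/Rτ`; any `a` with `φ̄ a ∉ Rτ` acts bijectively on `R/Rτ` (as `R/Rτ` is the field `k`).
Let `𝔭` be a maximal ideal of `A` different from `𝔭₀` (witnessed by some `a₀ ∈ 𝔭` with
`φ̄ a₀ ∉ Rτ`), and `A_𝔭 = AdicCompletion 𝔭 A` the `𝔭`-adic completion.  Then the inclusion
`R ↪ Rcirc` induces an isomorphism `A_𝔭 ⊗_A R ≅ A_𝔭 ⊗_A Rcirc`.
-/

open Submodule TensorProduct

lemma aux_isUnit_one_sub {A : Type*} [CommRing A] (I : Ideal A) (b : A) (hb : b ∈ I) :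
    IsUnit (1 - algebraMap A (AdicCompletion I A) b) := by
  have hst : ∀ m : ℕ, (I ^ m • ⊤ : Ideal A) = I ^ m := fun m => by ext x; simp
  refine isUnit_iff_exists_inv.mpr ?_
  refine ⟨⟨fun n => Ideal.Quotient.mk _ (∑ k ∈ Finset.range n, b ^ k), ?_⟩, ?_⟩
  · intro m n hmn
    show AdicCompletion.transitionMap I A hmn _ = _
    rw [AdicCompletion.transitionMap_ideal_mk, Ideal.Quotient.mk_eq_mk_iff_sub_mem, hst,
      ← Finset.sum_range_add_sum_Ico _ hmn, add_sub_cancel_left]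
    refine Ideal.sum_mem _ (fun k hk => ?_)
    rw [Finset.mem_Ico] at hk
    have : b ^ k = b ^ m * b ^ (k - m) := by
      rw [← pow_add]
      congr 1
      omega
    rw [this]
    exact Ideal.mul_mem_right _ _ (Ideal.pow_mem_pow hb m)
  · apply Subtype.ext
    funext n
    show ((1 : AdicCompletion I A) - algebraMap A (AdicCompletion I A) b).val n * _ =
      (1 : AdicCompletion I A).val n
    rw [AdicCompletion.val_sub, AdicCompletion.val_one]
    show (1 - Ideal.Quotient.mk (I ^ n • ⊤ : Ideal A) b) * Ideal.Quotient.mk _ _ = 1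
    rw [← map_one (Ideal.Quotient.mk (I ^ n • ⊤ : Ideal A)), ← map_sub, ← map_mul,
      Ideal.Quotient.mk_eq_mk_iff_sub_mem, hst]
    have : (1 - b) * (∑ k ∈ Finset.range n, b ^ k) - 1 = -(b ^ n) := by
      have h := mul_geom_sum b n
      have h2 : (1 - b) * ∑ k ∈ Finset.range n, b ^ k
          = -((b - 1) * ∑ k ∈ Finset.range n, b ^ k) := by ring
      rw [h2, h]; ring
    rw [this]
    exact neg_mem (Ideal.pow_mem_pow hb n)

theorem completion_tensor_twisted_ring_iso
    (p : ℕ) [Fact p.Prime]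
    (A : Type) [CommRing A] [IsDomain A] [IsDedekindDomain A] [CharP A p]
    (R Rcirc : Type) [Ring R] [Ring Rcirc]
    (ι : R →+* Rcirc) (hι : Function.Injective ι)
    (τ : R) (hτunit : IsUnit (ι τ))
    (hunion : ∀ x : Rcirc, ∃ (n : ℕ) (r : R), x * (ι τ) ^ n = ι r)
    (φ : A →+* R) (hφ : Function.Injective φ)
    -- `R/Rτ` is finite (it is the finite field `k`):
    (hfin : ∃ S : Finset R, ∀ y : R, ∃ s ∈ S, ∃ w : R, y = s + w * τ)
    -- any `a ∉ 𝔭₀` (i.e. `φ a ∉ Rτ`) acts bijectively on `R/Rτ ≅ k`: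
    (hresidue : ∀ a : A, (¬ ∃ r : R, φ a = r * τ) →
      (∀ y : R, ∃ z w : R, φ a * z + w * τ = y) ∧
      (∀ z : R, (∃ w : R, φ a * z = w * τ) → ∃ w' : R, z = w' * τ))
    (𝔭 : Ideal A) [𝔭.IsMaximal]
    -- `𝔭 ≠ 𝔭₀`, the characteristic ideal `𝔭₀ = ker (A → R/Rτ)`:
    (a₀ : A) (ha₀ : a₀ ∈ 𝔭) (ha₀R : ¬ ∃ r : R, φ a₀ = r * τ) :
    letI : Module A R := Module.compHom R φ
    letI : Module A Rcirc := Module.compHom Rcirc (ι.comp φ)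
    Function.Bijective
      (LinearMap.baseChange (AdicCompletion 𝔭 A)
        ({ toFun := ι,
           map_add' := fun x y => map_add ι x y,
           map_smul' := fun a r => map_mul ι (φ a) r } : R →ₗ[A] Rcirc)) := by
  classical
  letI : Module A R := Module.compHom R φ
  letI : Module A Rcirc := Module.compHom Rcirc (ι.comp φ)
  set f : R →ₗ[A] Rcirc :=
    { toFun := ι,
      map_add' := fun x y => map_add ι x y,
      map_smul' := fun a r => map_mul ι (φ a) r } with hf
  have hres := hresidue a₀ ha₀R
  -- injectivity of the a₀-action modulo ι R
  have hinj : ∀ y : Rcirc, (∃ s : R, ι (φ a₀) * y = ι s) → ∃ w : R, y = ι w := by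
    have H : ∀ n : ℕ, ∀ y : Rcirc, (∃ r : R, y * (ι τ) ^ n = ι r) →
        (∃ s : R, ι (φ a₀) * y = ι s) → ∃ w : R, y = ι w := by
      intro n
      induction n with
      | zero => intro y ⟨r, hr⟩ _; exact ⟨r, by simpa using hr⟩
      | succ n ih =>
        rintro y ⟨r, hr⟩ ⟨s, hs⟩
        have hy' : (y * ι τ) * (ι τ) ^ n = ι r := by
          rw [mul_assoc, ← pow_succ']; exact hr
        have hs' : ι (φ a₀) * (y * ι τ) = ι (s * τ) := by
          rw [← mul_assoc, hs, ← map_mul]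
        obtain ⟨w, hw⟩ := ih (y * ι τ) ⟨r, hy'⟩ ⟨s * τ, hs'⟩
        have hφw : φ a₀ * w = s * τ := by
          apply hι
          rw [map_mul, ← hw, ← mul_assoc, hs, ← map_mul]
        obtain ⟨w', hw'⟩ := hres.2 w ⟨s, hφw⟩
        refine ⟨w', ?_⟩
        have : y * ι τ = ι w' * ι τ := by rw [hw, hw', map_mul]
        exact hτunit.mul_right_cancel (by simpa using this)
    intro y hy
    obtain ⟨n, r, hn⟩ := hunion y
    exact H n y ⟨r, hn⟩ hy
  -- finitely many residues at each level
  obtain ⟨S, hS⟩ := hfin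
  have hfinlev : ∀ n : ℕ, ∃ T : Finset Rcirc, ∀ y : Rcirc, (∃ r : R, y * (ι τ) ^ n = ι r) →
      ∃ s ∈ T, ∃ w : R, y = s + ι w := by
    intro n
    induction n with
    | zero =>
      exact ⟨{0}, fun y ⟨r, hr⟩ =>
        ⟨0, Finset.mem_singleton_self 0, r, by simp at hr; rw [hr, zero_add]⟩⟩
    | succ n ih =>
      obtain ⟨T, hT⟩ := ih
      set u := hτunit.unit with hu
      refine ⟨(T ×ˢ S).image (fun q => (q.1 + ι q.2) * ↑u⁻¹), ?_⟩
      rintro y ⟨r, hr⟩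
      have hy' : (y * ι τ) * (ι τ) ^ n = ι r := by
        rw [mul_assoc, ← pow_succ']; exact hr
      obtain ⟨s, hsT, w, hw⟩ := hT (y * ι τ) ⟨r, hy'⟩
      obtain ⟨s', hs'S, w', hw'⟩ := hS w
      refine ⟨(s + ι s') * ↑u⁻¹,
        Finset.mem_image.mpr ⟨(s, s'), Finset.mem_product.mpr ⟨hsT, hs'S⟩, rfl⟩, w', ?_⟩
      have huτ : (↑u : Rcirc) = ι τ := hτunit.unit_spec
      have h1 : y = (y * ι τ) * ↑u⁻¹ := by
        rw [← huτ, mul_assoc, u.mul_inv, mul_one]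
      rw [h1, hw, hw', map_add, map_mul]
      rw [← add_assoc, add_mul, mul_assoc, ← huτ, u.mul_inv, mul_one]
  -- the key congruence: every element of Rcirc is fixed mod ι R by some positive power of a₀
  have key : ∀ y : Rcirc, ∃ t : ℕ, 0 < t ∧ ∃ r' : R, y - (ι (φ a₀)) ^ t * y = ι r' := by
    have hinjpow : ∀ (m : ℕ) (z : Rcirc),
        (∃ v : R, (ι (φ a₀)) ^ m * z = ι v) → ∃ w : R, z = ι w := by
      intro m
      induction m with
      | zero => intro z ⟨v, hv⟩; exact ⟨v, by simpa using hv⟩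
      | succ m ih =>
        rintro z ⟨v, hv⟩
        have : (ι (φ a₀)) ^ m * (ι (φ a₀) * z) = ι v := by
          rw [← mul_assoc, ← pow_succ]; exact hv
        obtain ⟨w, hw⟩ := ih (ι (φ a₀) * z) ⟨v, this⟩
        exact hinj z ⟨w, hw⟩
    intro y
    obtain ⟨n, r, hn⟩ := hunion y
    obtain ⟨T, hT⟩ := hfinlev n
    have hsel : ∀ k : ℕ, ∃ s ∈ T, ∃ w : R, (ι (φ a₀)) ^ k * y = s + ι w := by
      intro k
      refine hT _ ⟨(φ a₀) ^ k * r, ?_⟩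
      rw [mul_assoc, hn, ← map_pow, ← map_mul]
    choose s hsT w hw using hsel
    obtain ⟨i, -, j, -, hij, hsij⟩ :=
      Set.infinite_univ.exists_ne_map_eq_of_mapsTo (fun k _ => hsT k) T.finite_toSet
    have main : ∀ i j : ℕ, i < j → s i = s j →
        ∃ t : ℕ, 0 < t ∧ ∃ r' : R, y - (ι (φ a₀)) ^ t * y = ι r' := by
      intro i j hlt hs
      refine ⟨j - i, by omega, ?_⟩
      have hfac : (ι (φ a₀)) ^ i * (y - (ι (φ a₀)) ^ (j - i) * y) = ι (w i - w j) := by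
        rw [mul_sub, ← mul_assoc, ← pow_add]
        have : i + (j - i) = j := by omega
        rw [this, hw i, hw j, hs, map_sub]
        abel
      obtain ⟨w₀, hw₀⟩ := hinjpow i _ ⟨w i - w j, hfac⟩
      exact ⟨w₀, hw₀⟩
    rcases hij.lt_or_gt with hlt | hlt
    · exact main i j hlt hsij
    · exact main j i hlt hsij.symm
  constructor
  · -- injectivity, via flatness of the adic completion
    haveI : Module.Flat A (AdicCompletion 𝔭 A) :=
      (AdicCompletion.flat_of_isNoetherian 𝔭)
    rw [LinearMap.baseChange_eq_ltensor]
    exact Module.Flat.lTensor_preserves_injective_linearMap f hι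
  · -- surjectivity
    have hrange : ∀ z : AdicCompletion 𝔭 A ⊗[A] Rcirc,
        z ∈ LinearMap.range (f.baseChange (AdicCompletion 𝔭 A)) := by
      intro z
      induction z using TensorProduct.induction_on with
      | zero => exact zero_mem _
      | add x y hx hy => exact add_mem hx hy
      | tmul c y =>
        obtain ⟨t, ht, r', hr'⟩ := key y
        have hb : a₀ ^ t ∈ 𝔭 := Ideal.pow_mem_of_mem 𝔭 ha₀ t ht
        have hu := aux_isUnit_one_sub 𝔭 (a₀ ^ t) hb
        set d := (↑hu.unit⁻¹ : AdicCompletion 𝔭 A) * c with hd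
        refine ⟨d ⊗ₜ r', ?_⟩
        rw [LinearMap.baseChange_tmul]
        have hsmul : (a₀ ^ t) • y = (ι (φ a₀)) ^ t * y := by
          show ι (φ (a₀ ^ t)) * y = _
          rw [map_pow, map_pow]
        have h1 : (f r' : Rcirc) = y - (a₀ ^ t) • y := by
          show (ι r' : Rcirc) = _
          rw [hsmul, ← hr']
        calc d ⊗ₜ[A] f r' = d ⊗ₜ[A] y - d ⊗ₜ[A] ((a₀ ^ t) • y) := by
              rw [h1, TensorProduct.tmul_sub]
          _ = d ⊗ₜ[A] y - ((a₀ ^ t) • d) ⊗ₜ[A] y := by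
              rw [TensorProduct.tmul_smul, TensorProduct.smul_tmul']
          _ = ((1 - algebraMap A (AdicCompletion 𝔭 A) (a₀ ^ t)) * d) ⊗ₜ[A] y := by
              rw [Algebra.smul_def, sub_mul, one_mul, TensorProduct.sub_tmul]
          _ = c ⊗ₜ[A] y := by
              rw [← mul_assoc, hu.mul_val_inv, one_mul]
    intro z
    obtain ⟨x, hx⟩ := hrange z
    exact ⟨x, hx⟩
end
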